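/- Let X_1, X_2, X_3, … be a sequence of smooth vector fields on ℝ^d and let φ : ℝ^d → ℂ be smooth and compactly supported. Then there exists a sequence (c_m)_{m≥0} of positive real numbers such that for every sequence (a_m)_{m≥0} of complex numbers with |a_m| ≤ c_m for all m, the following holds: for all integers n ≥ 1, all indices i_1, …, i_n ≥ 1, and every multi-index α ∈ ℕ^d, the family (|a_{m_1}| ⋯ |a_{m_n}| · ‖∂^α X_{i_1}^{m_1} ⋯ X_{i_n}^{m_n} φ‖_∞) indexed by (m_1, …, m_n) ∈ ℕ^n is summable. -/
import Mathlib


/-- The action of a vector field `X : ℝ^d → ℝ^d` on a function: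
`(Xφ)(x) = Dφ(x)[X(x)]`. -/
noncomputable def vfApply {d : ℕ} (X : (Fin d → ℝ) → (Fin d → ℝ))
    (φ : (Fin d → ℝ) → ℂ) : (Fin d → ℝ) → ℂ :=
  fun x => fderiv ℝ φ x (X x)

/-- The partial derivative in the `i`-th coordinate direction. -/
noncomputable def pd {d : ℕ} (i : Fin d) (φ : (Fin d → ℝ) → ℂ) : (Fin d → ℝ) → ℂ :=
  fun x => fderiv ℝ φ x (Pi.single i 1)

/-- The iterated partial derivative `∂^α` associated to a multi-index `α ∈ ℕ^d`. -/
noncomputable def mpd {d : ℕ} (α : Fin d → ℕ) (φ : (Fin d → ℝ) → ℂ) : (Fin d → ℝ) → ℂ :=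
  ((List.finRange d).map (fun i => (pd i)^[α i])).foldr (fun op ψ => op ψ) φ

noncomputable def Sval {d : ℕ} (X : ℕ → (Fin d → ℝ) → (Fin d → ℝ))
    (φ : (Fin d → ℝ) → ℂ) (n : ℕ) (idx m : Fin n → ℕ) (α : Fin d → ℕ) : ℝ :=
  ⨆ x, ‖mpd α ((List.ofFn fun j => (vfApply (X (idx j)))^[m j]).foldr
      (fun op ψ => op ψ) φ) x‖

noncomputable def Gsup {d : ℕ} (X : ℕ → (Fin d → ℝ) → (Fin d → ℝ))
    (φ : (Fin d → ℝ) → ℂ) (T : ℕ) : ℝ :=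
  ⨆ γ : (n : Fin (T+1)) × (Fin (n : ℕ) → Fin (T+1)) × (Fin (n : ℕ) → Fin (T+1)) ×
      (Fin d → Fin (T+1)),
    Sval X φ (γ.1 : ℕ) (fun j => (γ.2.1 j : ℕ)) (fun j => (γ.2.2.1 j : ℕ))
      (fun i => (γ.2.2.2 i : ℕ))

lemma Sval_nonneg {d : ℕ} (X : ℕ → (Fin d → ℝ) → (Fin d → ℝ))
    (φ : (Fin d → ℝ) → ℂ) (n : ℕ) (idx m : Fin n → ℕ) (α : Fin d → ℕ) :
    0 ≤ Sval X φ n idx m α :=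
  Real.iSup_nonneg fun _ => norm_nonneg _

lemma Sval_le_Gsup {d : ℕ} (X : ℕ → (Fin d → ℝ) → (Fin d → ℝ))
    (φ : (Fin d → ℝ) → ℂ) (n : ℕ) (idx m : Fin n → ℕ) (α : Fin d → ℕ) (T : ℕ)
    (hn : n ≤ T) (hidx : ∀ j, idx j ≤ T) (hm : ∀ j, m j ≤ T) (hα : ∀ i, α i ≤ T) :
    Sval X φ n idx m α ≤ Gsup X φ T := by
  have hbdd : BddAbove (Set.range fun γ : (n : Fin (T+1)) × (Fin (n : ℕ) → Fin (T+1)) ×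
      (Fin (n : ℕ) → Fin (T+1)) × (Fin d → Fin (T+1)) =>
      Sval X φ (γ.1 : ℕ) (fun j => (γ.2.1 j : ℕ)) (fun j => (γ.2.2.1 j : ℕ))
        (fun i => (γ.2.2.2 i : ℕ))) := (Set.finite_range _).bddAbove
  have := le_ciSup hbdd
    (⟨⟨n, by omega⟩, fun j => ⟨idx j, by have := hidx j; omega⟩,
      fun j => ⟨m j, by have := hm j; omega⟩, fun i => ⟨α i, by have := hα i; omega⟩⟩ :
      (n : Fin (T+1)) × (Fin (n : ℕ) → Fin (T+1)) × (Fin (n : ℕ) → Fin (T+1)) ×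
        (Fin d → Fin (T+1)))
  exact this

lemma summable_pi_geom (n : ℕ) :
    Summable (fun m : Fin n → ℕ => ∏ j, ((1:ℝ)/2) ^ (m j)) := by
  induction n with
  | zero => simpa using summable_of_finite_support (Set.toFinite _)
  | succ n ih =>
    have hg : Summable (fun k : ℕ => ((1:ℝ)/2) ^ k) :=
      summable_geometric_of_lt_one (by norm_num) (by norm_num)
    have h := hg.mul_of_nonneg ih (fun k => by positivity)
      (fun m => Finset.prod_nonneg fun j _ => by positivity)
    rw [← (Fin.consEquiv (fun _ : Fin (n+1) => ℕ)).summable_iff]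
    refine h.congr fun p => ?_
    simp [Fin.consEquiv, Fin.prod_univ_succ, mul_comm]


/-- Coefficients can be chosen small enough that all the series defining
compositions `P(X_{i₁}) ⋯ P(X_{i_n}) φ`, differentiated by any `∂^α`, are summable
in sup norm. -/
theorem stmt6 (d : ℕ) (X : ℕ → (Fin d → ℝ) → (Fin d → ℝ))
    (hX : ∀ i, ContDiff ℝ (⊤ : ℕ∞) (X i))
    (φ : (Fin d → ℝ) → ℂ) (hφ : ContDiff ℝ (⊤ : ℕ∞) φ) (hφc : HasCompactSupport φ) :
    ∃ c : ℕ → ℝ, (∀ m, 0 < c m) ∧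
      ∀ a : ℕ → ℂ, (∀ m, ‖a m‖ ≤ c m) →
        ∀ (n : ℕ), 1 ≤ n → ∀ (idx : Fin n → ℕ) (α : Fin d → ℕ),
          Summable (fun m : Fin n → ℕ =>
            (∏ j, ‖a (m j)‖) *
              ⨆ x, ‖mpd α ((List.ofFn fun j => (vfApply (X (idx j)))^[m j]).foldr
                  (fun op ψ => op ψ) φ) x‖) := by
  classical
  set c : ℕ → ℝ := fun m => ((1:ℝ)/2) ^ m / (1 + max (Gsup X φ m) 0) with hcdef
  have hden : ∀ m : ℕ, (0:ℝ) < 1 + max (Gsup X φ m) 0 := fun m =>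
    add_pos_of_pos_of_nonneg one_pos (le_max_right _ _)
  have hcpos : ∀ m, 0 < c m := fun m => div_pos (by positivity) (hden m)
  have hcle : ∀ m, c m ≤ ((1:ℝ)/2) ^ m := fun m =>
    div_le_self (by positivity) (by have := le_max_right (Gsup X φ m) 0; linarith)
  refine ⟨c, hcpos, ?_⟩
  intro a ha n hn idx α
  show Summable (fun m : Fin n → ℕ => (∏ j, ‖a (m j)‖) * Sval X φ n idx m α)
  have hS : ∀ m : Fin n → ℕ, 0 ≤ Sval X φ n idx m α := fun m => Sval_nonneg X φ n idx m α
  have hanon : ∀ k, (0:ℝ) ≤ ‖a k‖ := fun k => norm_nonneg _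
  set M : ℕ := n + (∑ j, idx j) + (∑ i, α i) with hM
  have hidxM : ∀ j, idx j ≤ M := fun j => by
    have := Finset.single_le_sum (f := idx) (fun i _ => Nat.zero_le _) (Finset.mem_univ j)
    omega
  have hαM : ∀ i, α i ≤ M := fun i => by
    have := Finset.single_le_sum (f := α) (fun i _ => Nat.zero_le _) (Finset.mem_univ i)
    omega
  set s : Finset (Fin n → ℕ) := Fintype.piFinset (fun _ => Finset.range M) with hs
  set f : (Fin n → ℕ) → ℝ := fun m => (∏ j, ‖a (m j)‖) * Sval X φ n idx m α with hf
  set h : (Fin n → ℕ) → ℝ := fun m => if m ∈ s then f m else 0 with hh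
  have hsumh : Summable h := summable_of_ne_finset_zero (s := s) fun b hb => if_neg hb
  have hsumg : Summable (fun m : Fin n → ℕ => h m + ∏ j, ((1:ℝ)/2) ^ (m j)) :=
    hsumh.add (summable_pi_geom n)
  refine Summable.of_nonneg_of_le
    (fun m => mul_nonneg (Finset.prod_nonneg fun j _ => hanon _) (hS m)) (fun m => ?_) hsumg
  by_cases hms : m ∈ s
  · have : h m = f m := if_pos hms
    rw [this]
    exact le_add_of_nonneg_right (Finset.prod_nonneg fun j _ => by positivity)
  · have hh0 : h m = 0 := if_neg hms
    rw [hh0, zero_add]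
    obtain ⟨t0, ht0⟩ : ∃ t, M ≤ m t := by
      by_contra hcon
      push_neg at hcon
      exact hms (Fintype.mem_piFinset.2 fun j => Finset.mem_range.2 (hcon j))
    have hne : (Finset.univ : Finset (Fin n)).Nonempty := by
      have : Nonempty (Fin n) := ⟨⟨0, by omega⟩⟩
      exact Finset.univ_nonempty
    obtain ⟨t, -, hT⟩ := Finset.exists_mem_eq_sup Finset.univ hne m
    set T : ℕ := Finset.univ.sup m with hTdef
    have hmT : ∀ j, m j ≤ T := fun j => Finset.le_sup (Finset.mem_univ j)
    have hMT : M ≤ T := le_trans ht0 (hmT t0)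
    have hSle : Sval X φ n idx m α ≤ 1 + max (Gsup X φ T) 0 := by
      have h1 := Sval_le_Gsup X φ n idx m α T (by omega) (fun j => le_trans (hidxM j) hMT)
        hmT (fun i => le_trans (hαM i) hMT)
      have h2 := le_max_left (Gsup X φ T) 0
      linarith
    have key1 : ‖a (m t)‖ * Sval X φ n idx m α ≤ ((1:ℝ)/2) ^ T :=
      calc ‖a (m t)‖ * Sval X φ n idx m α ≤ c T * Sval X φ n idx m α := by
            rw [← hT]; exact mul_le_mul_of_nonneg_right (ha _) (hS m)
        _ ≤ c T * (1 + max (Gsup X φ T) 0) :=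
            mul_le_mul_of_nonneg_left hSle (hcpos T).le
        _ = ((1:ℝ)/2) ^ T := div_mul_cancel₀ _ (hden T).ne'
    calc (∏ j, ‖a (m j)‖) * Sval X φ n idx m α
        = (‖a (m t)‖ * ∏ j ∈ Finset.univ.erase t, ‖a (m j)‖) * Sval X φ n idx m α := by
          rw [← Finset.mul_prod_erase Finset.univ (fun j => ‖a (m j)‖) (Finset.mem_univ t)]
      _ = (‖a (m t)‖ * Sval X φ n idx m α) * ∏ j ∈ Finset.univ.erase t, ‖a (m j)‖ := by
          ring
      _ ≤ ((1:ℝ)/2) ^ T * ∏ j ∈ Finset.univ.erase t, ((1:ℝ)/2) ^ (m j) := by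
          refine mul_le_mul key1 ?_ (Finset.prod_nonneg fun j _ => hanon _) (by positivity)
          exact Finset.prod_le_prod (fun j _ => hanon _)
            (fun j _ => le_trans (ha _) (hcle _))
      _ = ((1:ℝ)/2) ^ (m t) * ∏ j ∈ Finset.univ.erase t, ((1:ℝ)/2) ^ (m j) := by rw [← hT]
      _ = ∏ j, ((1:ℝ)/2) ^ (m j) :=
          Finset.mul_prod_erase Finset.univ (fun j => ((1:ℝ)/2) ^ (m j)) (Finset.mem_univ t)
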